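/- arXiv:0902.2314 — 2 statements merged into one kernel-verified Lean document; each statement's English description precedes it below -/
import Mathlib

section
/- In A = ℚ[χ₁,...,χ₄], the ideal 𝔞 = (χ₁³, χ₂³, (χ₁²+χ₂²)χ₄ + χ₁χ₂χ₃) satisfies (χ₁χ₂)²·(χ₁,χ₂,χ₃,χ₄) ⊆ 𝔞 but χ₁χ₂ ∉ 𝔞; in particular 𝔞 is a mixed ideal (the maximal ideal (χ₁,χ₂,χ₃,χ₄) is an associated prime of A/𝔞 even though 𝔞 has codimension 3). -/
open MvPolynomial

private lemma low_deg {f : MvPolynomial (Fin 4) ℚ}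
    (hf : f ∈ Ideal.span ({X 0 ^ 3, X 1 ^ 3, (X 0 ^ 2 + X 1 ^ 2) * X 3 + X 0 * X 1 * X 2} :
      Set (MvPolynomial (Fin 4) ℚ))) :
    ∀ d, coeff d f ≠ 0 → 3 ≤ Finsupp.weight (1 : Fin 4 → ℕ) d := by
  have g3_homog : ((X 0 ^ 2 + X 1 ^ 2) * X 3 + X 0 * X 1 * X 2 :
      MvPolynomial (Fin 4) ℚ).IsHomogeneous 3 :=
    (((isHomogeneous_X_pow _ _).add (isHomogeneous_X_pow _ _)).mul (isHomogeneous_X _ _)).add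
      (((isHomogeneous_X _ _).mul (isHomogeneous_X _ _)).mul (isHomogeneous_X _ _))
  refine Submodule.span_induction ?_ ?_ ?_ ?_ hf
  · rintro x (rfl | rfl | rfl) d hd
    · exact le_of_eq (isHomogeneous_X_pow 0 3 hd).symm
    · exact le_of_eq (isHomogeneous_X_pow 1 3 hd).symm
    · exact le_of_eq (g3_homog hd).symm
  · intro d hd; simp at hd
  · intro x y _ _ hx hy d hd
    by_cases h : coeff d x = 0
    · exact hy d (by simpa [coeff_add, h] using hd)
    · exact hx d h
  · intro r x _ hx d hd
    have hds : d ∈ (r * x).support := mem_support_iff.mpr (by simpa using hd)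
    obtain ⟨u, hu, v, hv, huv⟩ := Finset.mem_add.mp (support_mul r x hds)
    calc 3 ≤ Finsupp.weight (1 : Fin 4 → ℕ) v := hx v (mem_support_iff.mp hv)
    _ ≤ Finsupp.weight (1 : Fin 4 → ℕ) u + Finsupp.weight (1 : Fin 4 → ℕ) v := le_add_self
    _ = Finsupp.weight (1 : Fin 4 → ℕ) d := by rw [← huv, map_add]

/-- Macaulay's mixed ideal: in `ℚ[χ₁,…,χ₄]`, for
`𝔞 = (χ₁³, χ₂³, (χ₁²+χ₂²)χ₄ + χ₁χ₂χ₃)` one has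
`(χ₁χ₂)²·(χ₁,χ₂,χ₃,χ₄) ⊆ 𝔞` but `χ₁χ₂ ∉ 𝔞`. -/
theorem stmt5 :
    let A := MvPolynomial (Fin 4) ℚ
    let c : Fin 4 → A := fun i => X i
    let a : Ideal A :=
      Ideal.span {c 0 ^ 3, c 1 ^ 3, (c 0 ^ 2 + c 1 ^ 2) * c 3 + c 0 * c 1 * c 2}
    (∀ f ∈ Ideal.span ({c 0, c 1, c 2, c 3} : Set A), (c 0 * c 1) ^ 2 * f ∈ a) ∧
    c 0 * c 1 ∉ a := by
  intro A c a
  have h1 : c 0 ^ 3 ∈ a := Ideal.subset_span (by simp)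
  have h2 : c 1 ^ 3 ∈ a := Ideal.subset_span (by simp)
  have hg : (c 0 ^ 2 + c 1 ^ 2) * c 3 + c 0 * c 1 * c 2 ∈ a := Ideal.subset_span (by simp)
  constructor
  · intro f hf
    refine Submodule.span_induction ?_ ?_ ?_ ?_ hf
    · rintro x (rfl | rfl | rfl | rfl)
      · rw [show (c 0 * c 1) ^ 2 * c 0 = c 1 ^ 2 * c 0 ^ 3 by ring]
        exact Ideal.mul_mem_left _ _ h1
      · rw [show (c 0 * c 1) ^ 2 * c 1 = c 0 ^ 2 * c 1 ^ 3 by ring]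
        exact Ideal.mul_mem_left _ _ h2
      · rw [show (c 0 * c 1) ^ 2 * c 2 =
          c 0 * c 1 * ((c 0 ^ 2 + c 1 ^ 2) * c 3 + c 0 * c 1 * c 2)
            - c 1 * c 3 * c 0 ^ 3 - c 0 * c 3 * c 1 ^ 3 by ring]
        exact sub_mem (sub_mem (Ideal.mul_mem_left _ _ hg) (Ideal.mul_mem_left _ _ h1))
          (Ideal.mul_mem_left _ _ h2)
      · rw [show (c 0 * c 1) ^ 2 * c 3 =
          c 0 ^ 2 * ((c 0 ^ 2 + c 1 ^ 2) * c 3 + c 0 * c 1 * c 2)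
            - c 0 * c 3 * c 0 ^ 3 - c 1 * c 2 * c 0 ^ 3 by ring]
        exact sub_mem (sub_mem (Ideal.mul_mem_left _ _ hg) (Ideal.mul_mem_left _ _ h1))
          (Ideal.mul_mem_left _ _ h1)
    · simp only [mul_zero]; exact a.zero_mem
    · intro x y _ _ hx hy
      rw [mul_add]; exact add_mem hx hy
    · intro r x _ hx
      rw [smul_eq_mul, show (c 0 * c 1) ^ 2 * (r * x) = r * ((c 0 * c 1) ^ 2 * x) by ring]
      exact Ideal.mul_mem_left _ _ hx
  · intro h
    have := low_deg h (Finsupp.single 0 1 + Finsupp.single 1 1) ?_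
    · simp [map_add, Finsupp.weight_apply, Finsupp.sum_single_index] at this
    · have : (X 0 * X 1 : MvPolynomial (Fin 4) ℚ) =
        monomial (Finsupp.single 0 1 + Finsupp.single 1 1) 1 := by
        rw [X, X, monomial_mul, one_mul]
      rw [this, coeff_monomial]
      simp
end

section
/- Let k be a field and D = k[d₁,d₂,d₃]. Let M = D/𝔞 with 𝔞 = (d₃², d₂d₃ − d₁², d₂²). Then 𝔞 is primary for 𝔪 = (d₁,d₂,d₃), M has k-dimension 8 with basis the residues of 1, d₁, d₂, d₃, d₁², d₁d₂, d₁d₃, d₁³, and the socle {m ∈ M | 𝔪m = 0} is one-dimensional, spanned by the residue of d₁³. -/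
open MvPolynomial

noncomputable def fS (p q r : ℕ) : Fin 3 →₀ ℕ :=
  Finsupp.single 0 p + Finsupp.single 1 q + Finsupp.single 2 r

lemma fS_apply0 (p q r : ℕ) : fS p q r 0 = p := by simp [fS, Finsupp.single_apply]
lemma fS_apply1 (p q r : ℕ) : fS p q r 1 = q := by simp [fS, Finsupp.single_apply]
lemma fS_apply2 (p q r : ℕ) : fS p q r 2 = r := by simp [fS, Finsupp.single_apply]

lemma fS_eq_iff {p q r p' q' r' : ℕ} :
    fS p q r = fS p' q' r' ↔ p = p' ∧ q = q' ∧ r = r' := by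
  constructor
  · intro h
    refine ⟨?_, ?_, ?_⟩
    · have := DFunLike.congr_fun h 0; rwa [fS_apply0, fS_apply0] at this
    · have := DFunLike.congr_fun h 1; rwa [fS_apply1, fS_apply1] at this
    · have := DFunLike.congr_fun h 2; rwa [fS_apply2, fS_apply2] at this
  · rintro ⟨rfl, rfl, rfl⟩; rfl

lemma fS_le_iff {p q r p' q' r' : ℕ} :
    fS p q r ≤ fS p' q' r' ↔ p ≤ p' ∧ q ≤ q' ∧ r ≤ r' := by
  constructor
  · intro h
    refine ⟨?_, ?_, ?_⟩
    · have := h 0; rwa [fS_apply0, fS_apply0] at this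
    · have := h 1; rwa [fS_apply1, fS_apply1] at this
    · have := h 2; rwa [fS_apply2, fS_apply2] at this
  · rintro ⟨h1, h2, h3⟩
    intro i
    match i with
    | 0 => rw [fS_apply0, fS_apply0]; exact h1
    | 1 => rw [fS_apply1, fS_apply1]; exact h2
    | 2 => rw [fS_apply2, fS_apply2]; exact h3

lemma fS_sub (p q r p' q' r' : ℕ) :
    fS p q r - fS p' q' r' = fS (p - p') (q - q') (r - r') := by
  ext i
  rw [Finsupp.tsub_apply]
  match i with
  | 0 => simp [fS_apply0]
  | 1 => simp [fS_apply1]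
  | 2 => simp [fS_apply2]

lemma fS_add (p q r p' q' r' : ℕ) :
    fS p q r + fS p' q' r' = fS (p + p') (q + q') (r + r') := by
  ext i
  rw [Finsupp.add_apply]
  match i with
  | 0 => simp [fS_apply0]
  | 1 => simp [fS_apply1]
  | 2 => simp [fS_apply2]

section
variable (k : Type*) [CommRing k]

lemma hm1 : (1 : MvPolynomial (Fin 3) k) = monomial (fS 0 0 0) 1 := by
  rw [show fS 0 0 0 = 0 by simp [fS]]; simp
lemma hmX0 : (X 0 : MvPolynomial (Fin 3) k) = monomial (fS 1 0 0) 1 := by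
  rw [show fS 1 0 0 = Finsupp.single 0 1 by simp [fS]]; rw [← X_pow_eq_monomial, pow_one]
lemma hmX1 : (X 1 : MvPolynomial (Fin 3) k) = monomial (fS 0 1 0) 1 := by
  rw [show fS 0 1 0 = Finsupp.single 1 1 by simp [fS]]; rw [← X_pow_eq_monomial, pow_one]
lemma hmX2 : (X 2 : MvPolynomial (Fin 3) k) = monomial (fS 0 0 1) 1 := by
  rw [show fS 0 0 1 = Finsupp.single 2 1 by simp [fS]]; rw [← X_pow_eq_monomial, pow_one]
lemma hm200 : (X 0 ^ 2 : MvPolynomial (Fin 3) k) = monomial (fS 2 0 0) 1 := by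
  rw [show fS 2 0 0 = Finsupp.single 0 2 by simp [fS]]; rw [X_pow_eq_monomial]
lemma hm300 : (X 0 ^ 3 : MvPolynomial (Fin 3) k) = monomial (fS 3 0 0) 1 := by
  rw [show fS 3 0 0 = Finsupp.single 0 3 by simp [fS]]; rw [X_pow_eq_monomial]
lemma hm020 : (X 1 ^ 2 : MvPolynomial (Fin 3) k) = monomial (fS 0 2 0) 1 := by
  rw [show fS 0 2 0 = Finsupp.single 1 2 by simp [fS]]; rw [X_pow_eq_monomial]
lemma hm002 : (X 2 ^ 2 : MvPolynomial (Fin 3) k) = monomial (fS 0 0 2) 1 := by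
  rw [show fS 0 0 2 = Finsupp.single 2 2 by simp [fS]]; rw [X_pow_eq_monomial]
lemma hm110 : (X 0 * X 1 : MvPolynomial (Fin 3) k) = monomial (fS 1 1 0) 1 := by
  rw [hmX0, hmX1, monomial_mul, fS_add, mul_one]
lemma hm101 : (X 0 * X 2 : MvPolynomial (Fin 3) k) = monomial (fS 1 0 1) 1 := by
  rw [hmX0, hmX2, monomial_mul, fS_add, mul_one]
lemma hm011 : (X 1 * X 2 : MvPolynomial (Fin 3) k) = monomial (fS 0 1 1) 1 := by
  rw [hmX1, hmX2, monomial_mul, fS_add, mul_one]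

end

lemma key18 (k : Type*) [Field k] (c : Fin 8 → k) (p q r : MvPolynomial (Fin 3) k)
    (h : C (c 0) * 1 + C (c 1) * X 0 + C (c 2) * X 1 + C (c 3) * X 2 + C (c 4) * X 0 ^ 2 +
        C (c 5) * (X 0 * X 1) + C (c 6) * (X 0 * X 2) + C (c 7) * X 0 ^ 3 =
      p * X 2 ^ 2 + q * (X 1 * X 2 - X 0 ^ 2) + r * X 1 ^ 2) :
    ∀ i, c i = 0 := by
  rw [hm1, hm200, hm300, hm020, hm002, hm110, hm101, hm011, hmX0, hmX1, hmX2] at h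
  simp only [C_mul_monomial, mul_one, mul_sub] at h
  have E : ∀ u v w : ℕ, coeff (fS u v w) _ = coeff (fS u v w) _ := fun u v w => congrArg _ h
  have E000 := E 0 0 0
  have E100 := E 1 0 0
  have E010 := E 0 1 0
  have E001 := E 0 0 1
  have E200 := E 2 0 0
  have E110 := E 1 1 0
  have E101 := E 1 0 1
  have E300 := E 3 0 0
  have E011 := E 0 1 1
  have E111 := E 1 1 1
  simp only [coeff_add, coeff_sub, coeff_monomial, coeff_mul_monomial', fS_eq_iff, fS_le_iff,
    fS_sub] at E000 E100 E010 E001 E200 E110 E101 E300 E011 E111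
  norm_num at E000 E100 E010 E001 E200 E110 E101 E300 E011 E111
  intro i
  match i with
  | 0 => exact E000
  | 1 => exact E100
  | 2 => exact E010
  | 3 => exact E001
  | 4 => rw [E200, ← E011]; ring
  | 5 => exact E110
  | 6 => exact E101
  | 7 => rw [E300, ← E111]; ring

set_option maxHeartbeats 16000000 in
set_option synthInstance.maxHeartbeats 400000 in
/-- For `D = k[d₁,d₂,d₃]` and `M = D/(d₃², d₂d₃ − d₁², d₂²)`: the ideal is
primary with radical `𝔪 = (d₁,d₂,d₃)`, `M` is 8-dimensional over `k` with
basis the residues of `1, d₁, d₂, d₃, d₁², d₁d₂, d₁d₃, d₁³`, and the socle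
`{m | 𝔪m = 0}` is spanned by the residue of `d₁³`. -/
theorem stmt18 (k : Type*) [Field k] :
    let D := MvPolynomial (Fin 3) k
    let d1 : D := X 0
    let d2 : D := X 1
    let d3 : D := X 2
    let a : Ideal D := Ideal.span {d3 ^ 2, d2 * d3 - d1 ^ 2, d2 ^ 2}
    let m : Ideal D := Ideal.span {d1, d2, d3}
    let π := Ideal.Quotient.mk a
    let v : Fin 8 → D ⧸ a :=
      ![π 1, π d1, π d2, π d3, π (d1 ^ 2), π (d1 * d2), π (d1 * d3), π (d1 ^ 3)]
    a.IsPrimary ∧ a.radical = m ∧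
    LinearIndependent k v ∧ Submodule.span k (Set.range v) = ⊤ ∧
    {x : D ⧸ a | ∀ c ∈ m, c • x = 0} =
      ↑(Submodule.span k ({π (d1 ^ 3)} : Set (D ⧸ a))) := by
  intro D d1 d2 d3 a m π v
  -- membership helper
  have mem_a : ∀ p q r : D, p * d3 ^ 2 + q * (d2 * d3 - d1 ^ 2) + r * d2 ^ 2 ∈ a := by
    intro p q r
    refine Ideal.add_mem a (Ideal.add_mem a ?_ ?_) ?_ <;>
      exact Ideal.mul_mem_left a _ (Ideal.subset_span (by simp))
  have mem_a' : ∀ x p q r : D, x = p * d3 ^ 2 + q * (d2 * d3 - d1 ^ 2) + r * d2 ^ 2 → x ∈ a := by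
    intro x p q r h; rw [h]; exact mem_a p q r
  have hd14 : d1 ^ 4 ∈ a := mem_a' _ (d2 ^ 2) (-(d2 * d3 + d1 ^ 2)) 0 (by ring)
  have h2sq : d2 ^ 2 ∈ a := mem_a' _ 0 0 1 (by ring)
  have h3sq : d3 ^ 2 ∈ a := mem_a' _ 1 0 0 (by ring)
  have hd1m : d1 ∈ m := Ideal.subset_span (by simp)
  have hd2m : d2 ∈ m := Ideal.subset_span (by simp)
  have hd3m : d3 ∈ m := Ideal.subset_span (by simp)
  -- quotient relations
  have e14 : π (d1 ^ 4) = 0 := Ideal.Quotient.eq_zero_iff_mem.2 hd14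
  have e2sq : π (d2 ^ 2) = 0 := Ideal.Quotient.eq_zero_iff_mem.2 h2sq
  have e3sq : π (d3 ^ 2) = 0 := Ideal.Quotient.eq_zero_iff_mem.2 h3sq
  have e23 : π (d2 * d3) = π (d1 ^ 2) :=
    Ideal.Quotient.eq.2 (mem_a' _ 0 1 0 (by ring))
  have e12_2 : π (d1 ^ 2 * d2) = 0 :=
    Ideal.Quotient.eq_zero_iff_mem.2 (mem_a' _ 0 (-d2) d3 (by ring))
  have e12_3 : π (d1 ^ 2 * d3) = 0 :=
    Ideal.Quotient.eq_zero_iff_mem.2 (mem_a' _ d2 (-d3) 0 (by ring))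
  have e123 : π (d1 * d2 * d3) = π (d1 ^ 3) :=
    Ideal.Quotient.eq.2 (mem_a' _ 0 d1 0 (by ring))
  have e13_2 : π (d1 ^ 3 * d2) = 0 :=
    Ideal.Quotient.eq_zero_iff_mem.2 (mem_a' _ 0 (-(d1 * d2)) (d1 * d3) (by ring))
  have e13_3 : π (d1 ^ 3 * d3) = 0 :=
    Ideal.Quotient.eq_zero_iff_mem.2 (mem_a' _ (d1 * d2) (-(d1 * d3)) 0 (by ring))
  have e1_2sq : π (d1 * d2 ^ 2) = 0 :=
    Ideal.Quotient.eq_zero_iff_mem.2 (mem_a' _ 0 0 d1 (by ring))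
  have e1_3sq : π (d1 * d3 ^ 2) = 0 :=
    Ideal.Quotient.eq_zero_iff_mem.2 (mem_a' _ d1 0 0 (by ring))
  -- v values
  have hv0 : v 0 = π 1 := rfl
  have hv1 : v 1 = π d1 := rfl
  have hv2 : v 2 = π d2 := rfl
  have hv3 : v 3 = π d3 := rfl
  have hv4 : v 4 = π (d1 ^ 2) := rfl
  have hv5 : v 5 = π (d1 * d2) := rfl
  have hv6 : v 6 = π (d1 * d3) := rfl
  have hv7 : v 7 = π (d1 ^ 3) := rfl
  -- scalar actions
  have smul_mk : ∀ (t : k) (x : D), t • π x = π (C t * x) := by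
    intro t x
    have h1 : t • π x = π (t • x) := rfl
    rw [h1, smul_eq_C_mul]
  have Dsmul : ∀ (cD : D) (x : D ⧸ a), cD • x = π cD * x := by
    intro cD x
    obtain ⟨y, rfl⟩ := Ideal.Quotient.mk_surjective x
    have h1 : cD • π y = π (cD * y) := rfl
    rw [h1, map_mul]
  -- m is maximal
  have hmker : m = RingHom.ker (constantCoeff : D →+* k) := by
    apply le_antisymm
    · rw [Ideal.span_le]
      rintro x hx
      simp only [Set.mem_insert_iff, Set.mem_singleton_iff] at hx
      rcases hx with rfl | rfl | rfl <;> exact RingHom.mem_ker.2 (constantCoeff_X k _)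
    · intro p hp
      rw [RingHom.mem_ker] at hp
      have hset : ({d1, d2, d3} : Set D) = MvPolynomial.X '' Set.univ := by
        rw [Set.image_univ]
        ext x
        constructor
        · rintro (rfl | rfl | rfl)
          exacts [⟨0, rfl⟩, ⟨1, rfl⟩, ⟨2, rfl⟩]
        · rintro ⟨i, rfl⟩
          match i with
          | 0 => left; rfl
          | 1 => right; left; rfl
          | 2 => right; right; rfl
      show p ∈ Ideal.span _
      rw [hset, mem_ideal_span_X_image]
      intro mo hmo
      by_contra hcon
      push_neg at hcon
      have : mo = 0 := by ext i; simpa using hcon i (Set.mem_univ i)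
      rw [mem_support_iff, this] at hmo
      exact hmo hp
  have hmmax : m.IsMaximal := by
    rw [hmker]
    exact RingHom.ker_isMaximal_of_surjective _ (fun r => ⟨C r, constantCoeff_C _ r⟩)
  have hrad : a.radical = m := by
    apply le_antisymm
    · rw [hmmax.isPrime.radical_le_iff, Ideal.span_le]
      rintro x hx
      simp only [Set.mem_insert_iff, Set.mem_singleton_iff] at hx
      rcases hx with rfl | rfl | rfl
      · show d3 ^ 2 ∈ m; rw [sq]; exact Ideal.mul_mem_left m d3 hd3m
      · exact Ideal.sub_mem m (Ideal.mul_mem_left m d2 hd3m)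
          (by rw [sq]; exact Ideal.mul_mem_left m d1 hd1m)
      · show d2 ^ 2 ∈ m; rw [sq]; exact Ideal.mul_mem_left m d2 hd2m
    · rw [Ideal.span_le]
      rintro x hx
      simp only [Set.mem_insert_iff, Set.mem_singleton_iff] at hx
      rcases hx with rfl | rfl | rfl
      · exact ⟨4, hd14⟩
      · exact ⟨2, h2sq⟩
      · exact ⟨2, h3sq⟩
  -- linear independence
  have hli : LinearIndependent k v := by
    rw [Fintype.linearIndependent_iff]
    intro c hc
    rw [Fin.sum_univ_eight, hv0, hv1, hv2, hv3, hv4, hv5, hv6, hv7] at hc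
    simp only [smul_mk] at hc
    rw [← map_add π, ← map_add π, ← map_add π, ← map_add π, ← map_add π, ← map_add π,
      ← map_add π] at hc
    have hmem := Ideal.Quotient.eq_zero_iff_mem.1 hc
    have hmem' : C (c 0) * 1 + C (c 1) * d1 + C (c 2) * d2 + C (c 3) * d3 + C (c 4) * d1 ^ 2 +
        C (c 5) * (d1 * d2) + C (c 6) * (d1 * d3) + C (c 7) * d1 ^ 3 ∈
        Ideal.span (insert (d3 ^ 2) {d2 * d3 - d1 ^ 2, d2 ^ 2}) := hmem
    rw [Ideal.mem_span_insert] at hmem'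
    obtain ⟨p, z, hz, hP⟩ := hmem'
    rw [Ideal.mem_span_pair] at hz
    obtain ⟨q, r, hz⟩ := hz
    refine key18 k c p q r ?_
    rw [← hz] at hP
    linear_combination hP
  -- spanning
  have hsp : Submodule.span k (Set.range v) = ⊤ := by
    rw [eq_top_iff]
    rintro x -
    obtain ⟨P, rfl⟩ := Ideal.Quotient.mk_surjective x
    have mem_v : ∀ j : Fin 8, v j ∈ Submodule.span k (Set.range v) :=
      fun j => Submodule.subset_span ⟨j, rfl⟩
    have hmul : ∀ x ∈ Submodule.span k (Set.range v), ∀ n : Fin 3,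
        x * π (X n) ∈ Submodule.span k (Set.range v) := by
      intro x hx n
      induction hx using Submodule.span_induction with
      | mem y hy =>
        obtain ⟨i, rfl⟩ := hy
        match i, n with
        | 0, 0 => rw [hv0, ← map_mul, show (1 * X 0 : D) = d1 by ring]; exact mem_v 1
        | 1, 0 => rw [hv1, ← map_mul, show (d1 * X 0 : D) = d1 ^ 2 by ring]; exact mem_v 4
        | 2, 0 => rw [hv2, ← map_mul, show (d2 * X 0 : D) = d1 * d2 by ring]; exact mem_v 5
        | 3, 0 => rw [hv3, ← map_mul, show (d3 * X 0 : D) = d1 * d3 by ring]; exact mem_v 6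
        | 4, 0 => rw [hv4, ← map_mul, show (d1 ^ 2 * X 0 : D) = d1 ^ 3 by ring]; exact mem_v 7
        | 5, 0 =>
          rw [hv5, ← map_mul, show (d1 * d2 * X 0 : D) = d1 ^ 2 * d2 by ring, e12_2]
          exact zero_mem _
        | 6, 0 =>
          rw [hv6, ← map_mul, show (d1 * d3 * X 0 : D) = d1 ^ 2 * d3 by ring, e12_3]
          exact zero_mem _
        | 7, 0 =>
          rw [hv7, ← map_mul, show (d1 ^ 3 * X 0 : D) = d1 ^ 4 by ring, e14]
          exact zero_mem _
        | 0, 1 => rw [hv0, ← map_mul, show (1 * X 1 : D) = d2 by ring]; exact mem_v 2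
        | 1, 1 => rw [hv1, ← map_mul, show (d1 * X 1 : D) = d1 * d2 by ring]; exact mem_v 5
        | 2, 1 =>
          rw [hv2, ← map_mul, show (d2 * X 1 : D) = d2 ^ 2 by ring, e2sq]
          exact zero_mem _
        | 3, 1 =>
          rw [hv3, ← map_mul, show (d3 * X 1 : D) = d2 * d3 by ring, e23]; exact mem_v 4
        | 4, 1 =>
          rw [hv4, ← map_mul, show (d1 ^ 2 * X 1 : D) = d1 ^ 2 * d2 by ring, e12_2]
          exact zero_mem _
        | 5, 1 =>
          rw [hv5, ← map_mul, show (d1 * d2 * X 1 : D) = d1 * d2 ^ 2 by ring, e1_2sq]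
          exact zero_mem _
        | 6, 1 =>
          rw [hv6, ← map_mul, show (d1 * d3 * X 1 : D) = d1 * d2 * d3 by ring, e123]
          exact mem_v 7
        | 7, 1 =>
          rw [hv7, ← map_mul, show (d1 ^ 3 * X 1 : D) = d1 ^ 3 * d2 by ring, e13_2]
          exact zero_mem _
        | 0, 2 => rw [hv0, ← map_mul, show (1 * X 2 : D) = d3 by ring]; exact mem_v 3
        | 1, 2 => rw [hv1, ← map_mul, show (d1 * X 2 : D) = d1 * d3 by ring]; exact mem_v 6
        | 2, 2 =>
          rw [hv2, ← map_mul, show (d2 * X 2 : D) = d2 * d3 by ring, e23]; exact mem_v 4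
        | 3, 2 =>
          rw [hv3, ← map_mul, show (d3 * X 2 : D) = d3 ^ 2 by ring, e3sq]
          exact zero_mem _
        | 4, 2 =>
          rw [hv4, ← map_mul, show (d1 ^ 2 * X 2 : D) = d1 ^ 2 * d3 by ring, e12_3]
          exact zero_mem _
        | 5, 2 =>
          rw [hv5, ← map_mul, show (d1 * d2 * X 2 : D) = d1 * d2 * d3 by ring, e123]
          exact mem_v 7
        | 6, 2 =>
          rw [hv6, ← map_mul, show (d1 * d3 * X 2 : D) = d1 * d3 ^ 2 by ring, e1_3sq]
          exact zero_mem _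
        | 7, 2 =>
          rw [hv7, ← map_mul, show (d1 ^ 3 * X 2 : D) = d1 ^ 3 * d3 by ring, e13_3]
          exact zero_mem _
      | zero => rw [zero_mul]; exact zero_mem _
      | add x y _ _ hx hy => rw [add_mul]; exact add_mem hx hy
      | smul t x _ hx => rw [smul_mul_assoc]; exact Submodule.smul_mem _ t hx
    induction P using MvPolynomial.induction_on with
    | C t =>
      have : π (C t) = t • v 0 := by rw [hv0, smul_mk, mul_one]
      rw [this]
      exact Submodule.smul_mem _ _ (mem_v 0)
    | add p q hp hq => rw [map_add]; exact add_mem hp hq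
    | mul_X p n hp => rw [map_mul]; exact hmul _ hp n
  refine ⟨Ideal.isPrimary_of_isMaximal_radical (by rwa [hrad]), hrad, hli, hsp, ?_⟩
  -- socle
  have hsoc_mem : ∀ cD ∈ m, cD * d1 ^ 3 ∈ a := by
    intro cD hc
    induction hc using Submodule.span_induction with
    | mem y hy =>
      simp only [Set.mem_insert_iff, Set.mem_singleton_iff] at hy
      rcases hy with rfl | rfl | rfl
      · exact mem_a' _ (d2 ^ 2) (-(d2 * d3 + d1 ^ 2)) 0 (by ring)
      · exact mem_a' _ 0 (-(d1 * d2)) (d1 * d3) (by ring)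
      · exact mem_a' _ (d1 * d2) (-(d1 * d3)) 0 (by ring)
    | zero => rw [zero_mul]; exact zero_mem _
    | add x y _ _ hx hy => rw [add_mul]; exact Ideal.add_mem a hx hy
    | smul t x _ hx => rw [smul_eq_mul, mul_assoc]; exact Ideal.mul_mem_left a t hx
  ext x
  simp only [Set.mem_setOf_eq, SetLike.mem_coe]
  constructor
  · intro hx
    have hxs : x ∈ Submodule.span k (Set.range v) := hsp ▸ Submodule.mem_top
    rw [Submodule.mem_span_range_iff_exists_fun] at hxs
    obtain ⟨c, hc⟩ := hxs
    have hli' := Fintype.linearIndependent_iff.1 hli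
    have hkey : ∀ n : Fin 3, π (X n) * x =
        c 0 • (π 1 * π (X n)) + c 1 • (π d1 * π (X n)) + c 2 • (π d2 * π (X n)) +
        c 3 • (π d3 * π (X n)) + c 4 • (π (d1 ^ 2) * π (X n)) +
        c 5 • (π (d1 * d2) * π (X n)) + c 6 • (π (d1 * d3) * π (X n)) +
        c 7 • (π (d1 ^ 3) * π (X n)) := by
      intro n
      rw [← hc, Fin.sum_univ_eight, hv0, hv1, hv2, hv3, hv4, hv5, hv6, hv7]
      simp only [mul_comm (π (X n)), add_mul, smul_mul_assoc]
    have h1 : π (X 0) * x = 0 := by rw [← Dsmul]; exact hx d1 hd1m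
    have h2 : π (X 1) * x = 0 := by rw [← Dsmul]; exact hx d2 hd2m
    have h3 : π (X 2) * x = 0 := by rw [← Dsmul]; exact hx d3 hd3m
    have E1 : c 0 • v 1 + c 1 • v 4 + c 2 • v 5 + c 3 • v 6 + c 4 • v 7 = 0 := by
      have h := (hkey 0).symm.trans h1
      rw [← map_mul, ← map_mul, ← map_mul, ← map_mul, ← map_mul, ← map_mul, ← map_mul,
        ← map_mul] at h
      rw [show (1 * X 0 : D) = d1 by ring, show (d1 * X 0 : D) = d1 ^ 2 by ring,
        show (d2 * X 0 : D) = d1 * d2 by ring, show (d3 * X 0 : D) = d1 * d3 by ring,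
        show (d1 ^ 2 * X 0 : D) = d1 ^ 3 by ring,
        show (d1 * d2 * X 0 : D) = d1 ^ 2 * d2 by ring,
        show (d1 * d3 * X 0 : D) = d1 ^ 2 * d3 by ring,
        show (d1 ^ 3 * X 0 : D) = d1 ^ 4 by ring, e12_2, e12_3, e14] at h
      rw [hv1, hv4, hv5, hv6, hv7]
      simpa only [smul_zero, add_zero] using h
    have g1z := hli' ![0, c 0, 0, 0, c 1, c 2, c 3, c 4] (by
      rw [Fin.sum_univ_eight]
      show (0 : k) • v 0 + c 0 • v 1 + (0 : k) • v 2 + (0 : k) • v 3 + c 1 • v 4 +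
        c 2 • v 5 + c 3 • v 6 + c 4 • v 7 = 0
      simp only [zero_smul, zero_add, add_zero]
      exact E1)
    have hc0 : c 0 = 0 := g1z 1
    have hc1 : c 1 = 0 := g1z 4
    have hc2 : c 2 = 0 := g1z 5
    have hc3 : c 3 = 0 := g1z 6
    have hc4 : c 4 = 0 := g1z 7
    have E2 : c 0 • v 2 + c 3 • v 4 + c 1 • v 5 + c 6 • v 7 = 0 := by
      have h := (hkey 1).symm.trans h2
      rw [← map_mul, ← map_mul, ← map_mul, ← map_mul, ← map_mul, ← map_mul, ← map_mul,
        ← map_mul] at h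
      rw [show (1 * X 1 : D) = d2 by ring, show (d1 * X 1 : D) = d1 * d2 by ring,
        show (d2 * X 1 : D) = d2 ^ 2 by ring, show (d3 * X 1 : D) = d2 * d3 by ring,
        show (d1 ^ 2 * X 1 : D) = d1 ^ 2 * d2 by ring,
        show (d1 * d2 * X 1 : D) = d1 * d2 ^ 2 by ring,
        show (d1 * d3 * X 1 : D) = d1 * d2 * d3 by ring,
        show (d1 ^ 3 * X 1 : D) = d1 ^ 3 * d2 by ring,
        e2sq, e23, e12_2, e1_2sq, e123, e13_2] at h
      rw [hv2, hv4, hv5, hv7]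
      rw [← h]
      simp only [smul_zero, add_zero, zero_add]
      abel
    have g2z := hli' ![0, 0, c 0, 0, c 3, c 1, 0, c 6] (by
      rw [Fin.sum_univ_eight]
      show (0 : k) • v 0 + (0 : k) • v 1 + c 0 • v 2 + (0 : k) • v 3 + c 3 • v 4 +
        c 1 • v 5 + (0 : k) • v 6 + c 6 • v 7 = 0
      simp only [zero_smul, zero_add, add_zero]
      exact E2)
    have hc6 : c 6 = 0 := g2z 7
    have E3 : c 0 • v 3 + c 2 • v 4 + c 1 • v 6 + c 5 • v 7 = 0 := by
      have h := (hkey 2).symm.trans h3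
      rw [← map_mul, ← map_mul, ← map_mul, ← map_mul, ← map_mul, ← map_mul, ← map_mul,
        ← map_mul] at h
      rw [show (1 * X 2 : D) = d3 by ring, show (d1 * X 2 : D) = d1 * d3 by ring,
        show (d2 * X 2 : D) = d2 * d3 by ring, show (d3 * X 2 : D) = d3 ^ 2 by ring,
        show (d1 ^ 2 * X 2 : D) = d1 ^ 2 * d3 by ring,
        show (d1 * d2 * X 2 : D) = d1 * d2 * d3 by ring,
        show (d1 * d3 * X 2 : D) = d1 * d3 ^ 2 by ring,
        show (d1 ^ 3 * X 2 : D) = d1 ^ 3 * d3 by ring,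
        e3sq, e23, e12_3, e1_3sq, e123, e13_3] at h
      rw [hv3, hv4, hv6, hv7]
      rw [← h]
      simp only [smul_zero, add_zero, zero_add]
      abel
    have g3z := hli' ![0, 0, 0, c 0, c 2, 0, c 1, c 5] (by
      rw [Fin.sum_univ_eight]
      show (0 : k) • v 0 + (0 : k) • v 1 + (0 : k) • v 2 + c 0 • v 3 + c 2 • v 4 +
        (0 : k) • v 5 + c 1 • v 6 + c 5 • v 7 = 0
      simp only [zero_smul, zero_add, add_zero]
      exact E3)
    have hc5 : c 5 = 0 := g3z 7
    rw [Submodule.mem_span_singleton]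
    refine ⟨c 7, ?_⟩
    rw [← hc, Fin.sum_univ_eight, hc0, hc1, hc2, hc3, hc4, hc5, hc6, hv7]
    simp
  · intro hx cD hcD
    rw [Submodule.mem_span_singleton] at hx
    obtain ⟨t, rfl⟩ := hx
    rw [smul_mk, Dsmul, ← map_mul,
      show (cD * (C t * d1 ^ 3) : D) = C t * (cD * d1 ^ 3) by ring, map_mul,
      Ideal.Quotient.eq_zero_iff_mem.2 (hsoc_mem cD hcD), mul_zero]
end
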